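/- Let $b \in \mathbb{R}^d$, $c \in M_d(\mathbb{R})$ symmetric, $F$ a measure on $\mathbb{R}^d$ with $\int (1 \wedge |x|^2)\,dF < \infty$, and $h$ a truncation function. Suppose $\vartheta, u \in \mathbb{R}^d$ are such that $\int_{\{|x|>1\}} e^{\langle \vartheta, x\rangle} dF < \infty$ and $\int_{\{|x|>1\}} e^{\langle \vartheta + zu, x\rangle} dF < \infty$ for a real $z$. Define $\kappa(v) = \langle v, b\rangle + \tfrac12\langle v, cv\rangle + \int (e^{\langle v,x\rangle} - 1 - \langle v, h(x)\rangle) dF$, and define the tilted characteristics $b^u = \langle u, b\rangle + \langle u, c\vartheta\rangle + \int (h_1(\langle u,x\rangle) e^{\langle\vartheta,x\rangle} - \langle u, h(x)\rangle) dF$, $c^u = \langle u, cu\rangle$, $F^u(E) = \int \mathbf{1}_E(\langle u,x\rangle) e^{\langle \vartheta,x\rangle} dF(x)$, with one-dimensional cumulant $\kappa^u(z) = z b^u + \tfrac12 z^2 c^u + \int (e^{zy} - 1 - z h_1(y))\, dF^u(y)$. Then $\kappa(\vartheta) + \kappa^u(z) = \kappa(\vartheta + zu)$. -/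
import Mathlib


open MeasureTheory

/-- The real Laplace cumulant of a `d`-dimensional triplet `(b, c, F)` with
truncation function `h`. -/
noncomputable def laplaceCumulant {d : ℕ} (b : Fin d → ℝ)
    (c : Matrix (Fin d) (Fin d) ℝ) (F : Measure (Fin d → ℝ))
    (h : (Fin d → ℝ) → (Fin d → ℝ)) (v : Fin d → ℝ) : ℝ :=
  (∑ i, v i * b i) + (1 / 2) * (∑ i, ∑ j, v i * c i j * v j) +
    ∫ x, (Real.exp (∑ i, v i * x i) - 1 - ∑ i, v i * h x i) ∂F

/-- Continuous-characteristics case of identity (4.26): additivity of the Laplace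
cumulant under the Esscher transform, `κ(ϑ) + κ^u(z) = κ(ϑ + z u)`. -/
theorem laplaceCumulant_esscher_additivity
    {d : ℕ} (b : Fin d → ℝ) (c : Matrix (Fin d) (Fin d) ℝ) (hc : c.IsSymm)
    (F : Measure (Fin d → ℝ))
    (hF : ∫⁻ x, ENNReal.ofReal (min 1 (‖x‖ ^ 2)) ∂F < ⊤)
    (h : (Fin d → ℝ) → (Fin d → ℝ)) (h₁ : ℝ → ℝ)
    (ϑ u : Fin d → ℝ) (z : ℝ)
    -- exponential moment conditions:
    (hϑ : ∫⁻ x in {x | 1 < ‖x‖}, ENNReal.ofReal (Real.exp (∑ i, ϑ i * x i)) ∂F < ⊤)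
    (hϑzu : ∫⁻ x in {x | 1 < ‖x‖},
        ENNReal.ofReal (Real.exp (∑ i, (ϑ i + z * u i) * x i)) ∂F < ⊤)
    -- integrability of the integrands appearing in the cumulants:
    (hi1 : Integrable (fun x => Real.exp (∑ i, ϑ i * x i) - 1 - ∑ i, ϑ i * h x i) F)
    (hi2 : Integrable (fun x =>
        Real.exp (∑ i, (ϑ i + z * u i) * x i) - 1 - ∑ i, (ϑ i + z * u i) * h x i) F)
    (hi3 : Integrable (fun x =>
        h₁ (∑ i, u i * x i) * Real.exp (∑ i, ϑ i * x i) - ∑ i, u i * h x i) F)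
    (hi4 : Integrable (fun x =>
        (Real.exp (z * ∑ i, u i * x i) - 1 - z * h₁ (∑ i, u i * x i)) *
          Real.exp (∑ i, ϑ i * x i)) F) :
    laplaceCumulant b c F h ϑ +
      -- κ^u(z) = z b^u + ½ z² c^u + ∫ (e^{zy} - 1 - z h₁(y)) dF^u(y):
      (z * ((∑ i, u i * b i) + (∑ i, ∑ j, u i * c i j * ϑ j) +
          ∫ x, (h₁ (∑ i, u i * x i) * Real.exp (∑ i, ϑ i * x i) - ∑ i, u i * h x i) ∂F) +
        (1 / 2) * z ^ 2 * (∑ i, ∑ j, u i * c i j * u j) +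
        ∫ x, (Real.exp (z * ∑ i, u i * x i) - 1 - z * h₁ (∑ i, u i * x i)) *
          Real.exp (∑ i, ϑ i * x i) ∂F) =
      laplaceCumulant b c F h (ϑ + z • u) := by
  classical
  have hz3 := hi3.const_mul z
  have hsym : (∑ i, ∑ j, ϑ i * c i j * u j) = ∑ i, ∑ j, u i * c i j * ϑ j := by
    rw [Finset.sum_comm]
    refine Finset.sum_congr rfl fun j _ => Finset.sum_congr rfl fun i _ => ?_
    rw [show c j i = c i j from (congrFun (congrFun hc i) j).symm ▸ rfl]
    ring
  have hb : (∑ i, (ϑ + z • u) i * b i)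
      = (∑ i, ϑ i * b i) + z * ∑ i, u i * b i := by
    simp only [Pi.add_apply, Pi.smul_apply, smul_eq_mul, add_mul,
      Finset.sum_add_distrib, Finset.mul_sum, mul_assoc]
  have hquad : (∑ i, ∑ j, (ϑ + z • u) i * c i j * (ϑ + z • u) j)
      = (∑ i, ∑ j, ϑ i * c i j * ϑ j) + 2 * z * (∑ i, ∑ j, u i * c i j * ϑ j)
        + z ^ 2 * (∑ i, ∑ j, u i * c i j * u j) := by
    have e : ∀ i j, (ϑ + z • u) i * c i j * (ϑ + z • u) j
        = ϑ i * c i j * ϑ j + z * (ϑ i * c i j * u j) + z * (u i * c i j * ϑ j)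
          + z ^ 2 * (u i * c i j * u j) := by
      intro i j
      simp only [Pi.add_apply, Pi.smul_apply, smul_eq_mul]
      ring
    simp_rw [e, Finset.sum_add_distrib, ← Finset.mul_sum]
    rw [hsym]; ring
  have hint : z * ∫ x, (h₁ (∑ i, u i * x i) * Real.exp (∑ i, ϑ i * x i)
        - ∑ i, u i * h x i) ∂F
      = ∫ x, z * (h₁ (∑ i, u i * x i) * Real.exp (∑ i, ϑ i * x i)
        - ∑ i, u i * h x i) ∂F := (integral_const_mul z _).symm
  have hsum : (∫ x, (Real.exp (∑ i, ϑ i * x i) - 1 - ∑ i, ϑ i * h x i) ∂F)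
      + ((∫ x, z * (h₁ (∑ i, u i * x i) * Real.exp (∑ i, ϑ i * x i)
          - ∑ i, u i * h x i) ∂F)
        + ∫ x, (Real.exp (z * ∑ i, u i * x i) - 1 - z * h₁ (∑ i, u i * x i)) *
            Real.exp (∑ i, ϑ i * x i) ∂F)
      = ∫ x, (Real.exp (∑ i, (ϑ + z • u) i * x i) - 1
          - ∑ i, (ϑ + z • u) i * h x i) ∂F := by
    have h34 : Integrable (fun x =>
        z * (h₁ (∑ i, u i * x i) * Real.exp (∑ i, ϑ i * x i) - ∑ i, u i * h x i)
        + (Real.exp (z * ∑ i, u i * x i) - 1 - z * h₁ (∑ i, u i * x i)) *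
            Real.exp (∑ i, ϑ i * x i)) F := hz3.add hi4
    rw [← integral_add hz3 hi4, ← integral_add hi1 h34]
    refine integral_congr_ae (Filter.Eventually.of_forall fun x => ?_)
    have hs1 : (∑ i, (ϑ + z • u) i * x i)
        = (∑ i, ϑ i * x i) + z * ∑ i, u i * x i := by
      simp only [Pi.add_apply, Pi.smul_apply, smul_eq_mul, add_mul,
        Finset.sum_add_distrib, Finset.mul_sum, mul_assoc]
    have hs2 : (∑ i, (ϑ + z • u) i * h x i)
        = (∑ i, ϑ i * h x i) + z * ∑ i, u i * h x i := by
      simp only [Pi.add_apply, Pi.smul_apply, smul_eq_mul, add_mul,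
        Finset.sum_add_distrib, Finset.mul_sum, mul_assoc]
    have he : Real.exp (∑ i, (ϑ + z • u) i * x i)
        = Real.exp (z * ∑ i, u i * x i) * Real.exp (∑ i, ϑ i * x i) := by
      rw [← Real.exp_add, hs1]; ring_nf
    simp only [hs2, he]
    ring
  simp only [laplaceCumulant, hb, hquad, ← hsum, ← hint]
  ring
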